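/- Let p be real with 1/2 ≤ p ≤ 1 and let n ≥ 1. If C_{n−1}(p) ≥ 1/3, then C_n(p) ≤ C_{n−1}(p). -/
import Mathlib


/-- For 1/2 ≤ p ≤ 1 and n ≥ 1, if C_{n-1} ≥ 1/3 then C_n ≤ C_{n-1}. -/
theorem fitch_C_large_decreases
    (p : ℝ) (C D : ℕ → ℝ)
    (hC0 : C 0 = 0) (hD0 : D 0 = 1)
    (hC : ∀ n, 2 * C (n + 1) =
        1 - 2 * C n + 3 * (C n) ^ 2 - (2 * p - 1) ^ 2 * (D n) ^ 2)
    (hD : ∀ n, D (n + 1) = (2 * p - 1) * (1 + C n) * D n)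
    (hp1 : 1 / 2 ≤ p) (hp2 : p ≤ 1)
    (n : ℕ) (hn : 1 ≤ n) (h : 1 / 3 ≤ C (n - 1)) :
    C n ≤ C (n - 1) := by
  have hq0 : (0:ℝ) ≤ 2 * p - 1 := by linarith
  have hq1 : 2 * p - 1 ≤ 1 := by linarith
  have key : ∀ m, 0 ≤ C m ∧ C m ≤ 1 ∧ (2 * p - 1) * |D m| ≤ 1 - C m := by
    intro m
    induction m with
    | zero =>
      rw [hC0, hD0]
      norm_num
      linarith
    | succ k ih =>
      obtain ⟨h0, h1, hd⟩ := ih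
      have hCk := hC k
      have habs : |D (k + 1)| = (2 * p - 1) * (1 + C k) * |D k| := by
        rw [hD k, abs_mul, abs_mul, abs_of_nonneg hq0,
          abs_of_nonneg (by linarith : (0:ℝ) ≤ 1 + C k)]
      have hDa := abs_nonneg (D k)
      have hsq := sq_abs (D k)
      have hD2 : (2 * p - 1) ^ 2 * (D k) ^ 2 ≤ (1 - C k) ^ 2 := by
        nlinarith [mul_self_le_mul_self (mul_nonneg hq0 hDa) hd]
      refine ⟨by nlinarith, by nlinarith, ?_⟩
      rw [habs]
      nlinarith [mul_nonneg (mul_nonneg hq0 hDa) (sub_nonneg.2 h0),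
        mul_nonneg (sub_nonneg.2 hq1) (mul_nonneg (mul_nonneg hq0 hDa) (by linarith : (0:ℝ) ≤ 1 + C k)),
        mul_nonneg (sub_nonneg.2 hd) (by linarith : (0:ℝ) ≤ 1 + 3 * C k - (2 * p - 1) * |D k|)]
  obtain ⟨m, rfl⟩ : ∃ m, n = m + 1 := ⟨n - 1, (Nat.succ_pred_eq_of_pos hn).symm⟩
  simp only [Nat.add_sub_cancel] at h ⊢
  obtain ⟨h0, h1, hd⟩ := key m
  have hCk := hC m
  have hDa := abs_nonneg (D m)
  have hsq := sq_abs (D m)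
  nlinarith [mul_nonneg (mul_nonneg hq0 hDa) (mul_nonneg hq0 hDa),
    mul_nonneg (sub_nonneg.2 h1) (by linarith : (0:ℝ) ≤ 3 * C m - 1)]
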